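/- Let u : [0, ∞) → ℝ be continuous and suppose there exist ε > 0 and T ≥ 0 such that u(s) + c ∫₀ˢ u(t)² dt ≤ −ε for all s ≥ T, where c > 0. Then we reach a contradiction; i.e., no continuous u satisfies such a uniform negative bound for all large s. -/

import Mathlib

/-- No continuous `u : [0, ∞) → ℝ` satisfies `u s + c ∫₀ˢ u² ≤ -ε` for all `s ≥ T`,
where `c > 0`, `ε > 0`, `T ≥ 0`. -/
theorem guimaraes_no_uniform_negative_bound (u : ℝ → ℝ)
    (hu : ContinuousOn u (Set.Ici 0)) (c : ℝ) (hc : 0 < c)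
    (ε : ℝ) (hε : 0 < ε) (T : ℝ) (hT : 0 ≤ T)
    (hbound : ∀ s, T ≤ s → u s + c * ∫ t in (0:ℝ)..s, u t ^ 2 ≤ -ε) :
    False := by
  set I : ℝ → ℝ := fun s => ∫ t in (0:ℝ)..s, u t ^ 2 with hIdef
  have hcont : ContinuousOn (fun t => u t ^ 2) (Set.Ici 0) := hu.pow 2
  have hint : ∀ a b : ℝ, 0 ≤ a → 0 ≤ b →
      IntervalIntegrable (fun t => u t ^ 2) MeasureTheory.volume a b := by
    intro a b ha hb
    refine (hcont.mono ?_).intervalIntegrable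
    intro x hx
    rcases le_total a b with h | h
    · rw [Set.uIcc_of_le h] at hx; exact le_trans ha hx.1
    · rw [Set.uIcc_of_ge h] at hx; exact le_trans hb hx.1
  have hadd : ∀ s s', 0 ≤ s → 0 ≤ s' → I s' = I s + ∫ t in s..s', u t ^ 2 := by
    intro s s' hs hs'
    simp only [hIdef]
    rw [← intervalIntegral.integral_add_adjacent_intervals (hint 0 s le_rfl hs)
      (hint s s' hs hs')]
  have hI0 : ∀ s, 0 ≤ s → 0 ≤ I s := by
    intro s hs
    exact intervalIntegral.integral_nonneg hs (fun t _ => by positivity)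
  have hmono : ∀ s s', 0 ≤ s → s ≤ s' → I s ≤ I s' := by
    intro s s' hs hss'
    rw [hadd s s' hs (le_trans hs hss')]
    have : 0 ≤ ∫ t in s..s', u t ^ 2 :=
      intervalIntegral.integral_nonneg hss' (fun t _ => by positivity)
    linarith
  have hub : ∀ t, T ≤ t → u t ≤ -(ε + c * I t) := by
    intro t ht
    have := hbound t ht
    rw [hIdef]
    dsimp only
    linarith
  have key : ∀ s s', T ≤ s → s ≤ s' → I s + c ^ 2 * (I s) ^ 2 * (s' - s) ≤ I s' := by
    intro s s' hs hss'
    have h0s : (0:ℝ) ≤ s := le_trans hT hs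
    rw [hadd s s' h0s (le_trans h0s hss')]
    have hmain : ∫ t in s..s', (c * I s) ^ 2 ≤ ∫ t in s..s', u t ^ 2 := by
      refine intervalIntegral.integral_mono_on hss' intervalIntegrable_const
        (hint s s' h0s (le_trans h0s hss')) ?_
      intro t ht
      have hts : I s ≤ I t := hmono s t h0s ht.1
      have hIs : 0 ≤ I s := hI0 s h0s
      have hut : u t ≤ -(ε + c * I t) := hub t (le_trans hs ht.1)
      have h1 : u t ≤ -(c * I s) := by nlinarith [hc.le]
      nlinarith [sq_nonneg (u t + c * I s), mul_nonneg hc.le hIs]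
    rw [intervalIntegral.integral_const, smul_eq_mul] at hmain
    nlinarith [hmain]
  have step : ∀ s X, T ≤ s → 0 < X → X ≤ I s → 2 * X ≤ I (s + 1 / (c ^ 2 * X)) := by
    intro s X hs hX hXI
    have hpos : (0:ℝ) < c ^ 2 * X := by positivity
    have h := key s (s + 1 / (c ^ 2 * X)) hs
      (le_add_of_nonneg_right (by positivity))
    have heq : c ^ 2 * (I s) ^ 2 * (s + 1 / (c ^ 2 * X) - s) = (I s) ^ 2 / X := by
      field_simp; ring
    rw [heq] at h
    have hIs : 0 ≤ I s := le_trans hX.le hXI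
    have h2 : X ≤ (I s) ^ 2 / X := by
      rw [le_div_iff₀ hX]
      nlinarith
    linarith
  -- base: I (T+1) ≥ ε^2
  have hbase : ε ^ 2 ≤ I (T + 1) := by
    have hIT : 0 ≤ I T := hI0 T hT
    rw [hadd T (T + 1) hT (by linarith)]
    have hmain : ∫ t in T..(T+1), ε ^ 2 ≤ ∫ t in T..(T+1), u t ^ 2 := by
      refine intervalIntegral.integral_mono_on (by linarith) intervalIntegrable_const
        (hint T (T+1) hT (by linarith)) ?_
      intro t ht
      have hut : u t ≤ -(ε + c * I t) := hub t ht.1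
      have hIt : 0 ≤ I t := hI0 t (le_trans hT ht.1)
      nlinarith [sq_nonneg (u t + ε), mul_nonneg hc.le hIt]
    rw [intervalIntegral.integral_const, smul_eq_mul] at hmain
    have : (T + 1 - T) * ε ^ 2 = ε ^ 2 := by ring
    rw [this] at hmain
    linarith
  -- the doubling sequence
  set tn : ℕ → ℝ := fun n => Nat.rec (T + 1)
    (fun k t => t + 1 / (c ^ 2 * (2 ^ k * ε ^ 2))) n with htn
  have htn0 : tn 0 = T + 1 := rfl
  have htnsucc : ∀ n, tn (n + 1) = tn n + 1 / (c ^ 2 * (2 ^ n * ε ^ 2)) := fun n => rfl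
  have htnge : ∀ n, T + 1 ≤ tn n := by
    intro n
    induction n with
    | zero => simp [htn0]
    | succ k ih =>
      rw [htnsucc]
      have : (0:ℝ) < 1 / (c ^ 2 * (2 ^ k * ε ^ 2)) := by positivity
      linarith
  have htnle : ∀ n, tn n = T + 1 + 2 / (c ^ 2 * ε ^ 2) * (1 - (1/2) ^ n) := by
    intro n
    induction n with
    | zero => simp [htn0]
    | succ k ih =>
      rw [htnsucc, ih]
      have h2k : (2:ℝ) ^ k ≠ 0 := by positivity
      field_simp
      have h12 : ((1:ℝ) / 2) ^ k * 2 ^ k = 1 := by rw [← mul_pow]; norm_num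
      linear_combination (-1:ℝ) * h12
  have hgrow : ∀ n, 2 ^ n * ε ^ 2 ≤ I (tn n) := by
    intro n
    induction n with
    | zero => simpa [htn0] using hbase
    | succ k ih =>
      have hs : T ≤ tn k := by have := htnge k; linarith
      have hX : (0:ℝ) < 2 ^ k * ε ^ 2 := by positivity
      have h := step (tn k) (2 ^ k * ε ^ 2) hs hX ih
      rw [← htnsucc] at h
      calc (2:ℝ) ^ (k+1) * ε ^ 2 = 2 * (2 ^ k * ε ^ 2) := by ring
        _ ≤ I (tn (k + 1)) := h
  -- blowup time
  set S : ℝ := T + 1 + 2 / (c ^ 2 * ε ^ 2) with hS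
  have hSn : ∀ n, tn n ≤ S := by
    intro n
    rw [htnle n, hS]
    have h1 : (0:ℝ) < 2 / (c ^ 2 * ε ^ 2) := by positivity
    have h2 : (0:ℝ) < (1/2:ℝ) ^ n := by positivity
    nlinarith
  have hfin : ∀ n : ℕ, 2 ^ n * ε ^ 2 ≤ I S := by
    intro n
    refine le_trans (hgrow n) (hmono (tn n) S ?_ (hSn n))
    have := htnge n; linarith
  obtain ⟨n, hn⟩ := pow_unbounded_of_one_lt (I S / ε ^ 2) (one_lt_two (α := ℝ))
  have := hfin n
  rw [div_lt_iff₀ (by positivity)] at hn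
  nlinarith
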